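/- The operator D^l = (∂_{x^i}∂_{p_i})^l on symbols homogeneous of degree k in p and of weight δ is invariant under the projective Lie algebra sl_{n+1} (i.e. commutes with L^δ_X for all projective vector fields X, as a map to weight-δ symbols of degree k-l) if and only if δ = 1 + (2k - l - 1)/(n+1). -/

import Mathlib

open MvPolynomial

noncomputable section

/-- Polynomial symbols: polynomial functions on `T*ℝⁿ`; `Sum.inl` are the `x` variables,
`Sum.inr` the fiber variables `p`. -/
abbrev PolySym (n : ℕ) := MvPolynomial (Fin n ⊕ Fin n) ℝ

/-- Polynomial functions on `ℝⁿ` (densities are identified with these). -/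
abbrev PolyDen (n : ℕ) := MvPolynomial (Fin n) ℝ

/-- Polynomial vector fields on `ℝⁿ`, given by their components. -/
abbrev PolyVF (n : ℕ) := Fin n → PolyDen n

/-- `∂/∂x^i` on symbols. -/
def dxOp (n : ℕ) (i : Fin n) : Module.End ℝ (PolySym n) := (pderiv (Sum.inl i)).toLinearMap

/-- `∂/∂p_i` on symbols. -/
def dpOp (n : ℕ) (i : Fin n) : Module.End ℝ (PolySym n) := (pderiv (Sum.inr i)).toLinearMap

/-- Multiplication by a symbol. -/
def mulOp (n : ℕ) (q : PolySym n) : Module.End ℝ (PolySym n) := LinearMap.mulLeft ℝ q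

/-- The symbol `x^i`. -/
def xVar (n : ℕ) (i : Fin n) : PolySym n := X (Sum.inl i)

/-- The symbol `p_i`. -/
def pVar (n : ℕ) (i : Fin n) : PolySym n := X (Sum.inr i)

/-- A polynomial in `x` viewed as a symbol. -/
def liftX (n : ℕ) (f : PolyDen n) : PolySym n := rename Sum.inl f

/-- Divergence of a vector field. -/
def divVF (n : ℕ) (Xf : PolyVF n) : PolyDen n := ∑ i, pderiv i (Xf i)

/-- Weight function computing the degree in the `p` variables. -/
def pwt (n : ℕ) : Fin n ⊕ Fin n → ℕ := Sum.elim (fun _ => 0) (fun _ => 1)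

/-- Homogeneity of degree `k` in the fiber variables `p`. -/
def IsPHomog (n : ℕ) (P : PolySym n) (k : ℕ) : Prop := IsWeightedHomogeneous (pwt n) P k

/-- The weight-`δ` action `L^δ_X = X^i ∂_{x^i} - p_j (∂_{x^i} X^j) ∂_{p_i} + δ Div(X)` of a
vector field on symbols. -/
def Lop (n : ℕ) (δ : ℝ) (Xf : PolyVF n) : Module.End ℝ (PolySym n) :=
  (∑ i, mulOp n (liftX n (Xf i)) ∘ₗ dxOp n i)
    - (∑ i, ∑ j, mulOp n (pVar n j * liftX n (pderiv i (Xf j))) ∘ₗ dpOp n i)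
    + δ • mulOp n (liftX n (divVF n Xf))

/-- The action `ℓ^λ_X = X + λ Div(X)` of a vector field on `λ`-densities. -/
def ellOp (n : ℕ) (lam : ℝ) (Xf : PolyVF n) : Module.End ℝ (PolyDen n) :=
  (∑ i, LinearMap.mulLeft ℝ (Xf i) ∘ₗ (pderiv i).toLinearMap)
    + lam • LinearMap.mulLeft ℝ (divVF n Xf)

/-- Lie bracket of polynomial vector fields. -/
def bracketVF (n : ℕ) (Xf Yf : PolyVF n) : PolyVF n :=
  fun i => ∑ j, (Xf j * pderiv j (Yf i) - Yf j * pderiv j (Xf i))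
/-- The projective inversion `X^i = x^i x^j ∂_j`. -/
def projVF (n : ℕ) (i : Fin n) : PolyVF n := fun j => X i * X j

/-- The divergence operator `D = ∂_{x^i} ∂_{p_i}` on symbols. -/
def divOp (n : ℕ) : Module.End ℝ (PolySym n) := ∑ i, dxOp n i ∘ₗ dpOp n i

/-- Generators of the projective algebra `sl_{n+1}`: affine vector fields together with the
projective inversions. -/
def projGenSet (n : ℕ) : Set (PolyVF n) :=
  {Xf | ∀ i, (Xf i).totalDegree ≤ 1} ∪ Set.range (projVF n)

section Aux
variable {n : ℕ}

lemma pderiv_comm' {σ R : Type*} [CommSemiring R] (u v : σ) (f : MvPolynomial σ R) :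
    pderiv u (pderiv v f) = pderiv v (pderiv u f) := by
  classical
  induction f using MvPolynomial.induction_on' with
  | add f g hf hg => simp [hf, hg]
  | monomial s a =>
    rcases eq_or_ne u v with rfl | huv
    · rfl
    · simp only [pderiv_monomial]
      have h1 : ((s - Finsupp.single v 1 : _ →₀ ℕ) u) = s u := by
        simp [Finsupp.tsub_apply, Finsupp.single_apply, huv.symm]
      have h2 : ((s - Finsupp.single u 1 : _ →₀ ℕ) v) = s v := by
        simp [Finsupp.tsub_apply, Finsupp.single_apply, huv]
      rw [h1, h2]
      have h3 : s - Finsupp.single v 1 - Finsupp.single u 1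
          = s - Finsupp.single u 1 - Finsupp.single v 1 := by
        ext w; simp only [Finsupp.tsub_apply]; omega
      rw [h3]; ring_nf

lemma pweight_eq (s : (Fin n ⊕ Fin n) →₀ ℕ) :
    Finsupp.weight (pwt n) s = ∑ j : Fin n, s (Sum.inr j) := by
  rw [Finsupp.weight_apply, Finsupp.sum_fintype _ _ (by simp)]
  rw [Fintype.sum_sum_type]
  simp [pwt]

lemma liftX_pderiv_inr (c : Fin n) (f : PolyDen n) : pderiv (Sum.inr c) (liftX n f) = 0 := by
  apply pderiv_eq_zero_of_notMem_vars
  intro h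
  obtain ⟨i, -, hi⟩ := mem_vars_rename _ _ h
  exact Sum.inl_ne_inr hi

lemma liftX_pderiv_inl (c : Fin n) (f : PolyDen n) :
    pderiv (Sum.inl c) (liftX n f) = liftX n (pderiv c f) :=
  pderiv_rename Sum.inl_injective c f

lemma liftX_mul (f g : PolyDen n) : liftX n (f * g) = liftX n f * liftX n g := map_mul _ _ _

lemma isPHomog_pderiv {P : PolySym n} {k : ℕ} (h : IsPHomog n P k) (v : Fin n ⊕ Fin n) :
    IsPHomog n (pderiv v P) (k - pwt n v) := by
  classical
  have hrw : pderiv v P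
      = ∑ s ∈ P.support, monomial (s - Finsupp.single v 1) (coeff s P * s v) := by
    conv_lhs => rw [P.as_sum]
    rw [map_sum]
    simp [pderiv_monomial]
  rw [hrw]
  apply IsWeightedHomogeneous.sum
  intro s hs
  rcases Nat.eq_zero_or_pos (s v) with h0 | h1
  · rw [h0]
    norm_num
    exact isWeightedHomogeneous_zero _ _ _
  · apply isWeightedHomogeneous_monomial
    have hle : Finsupp.single v 1 ≤ s := by
      rw [Finsupp.single_le_iff]; exact h1
    have hadd : (s - Finsupp.single v 1) + Finsupp.single v 1 = s := tsub_add_cancel_of_le hle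
    have hw : Finsupp.weight (pwt n) s = k := h (by rwa [MvPolynomial.mem_support_iff] at hs)
    have h2 := congrArg (Finsupp.weight (pwt n)) hadd
    rw [map_add] at h2
    have hsingle : Finsupp.weight (pwt n) (Finsupp.single v 1) = pwt n v := by
      rw [Finsupp.weight_apply, Finsupp.sum_single_index] <;> simp
    rw [hsingle, hw] at h2
    omega

lemma isPHomog_pderiv_inl {P : PolySym n} {k : ℕ} (h : IsPHomog n P k) (c : Fin n) :
    IsPHomog n (pderiv (Sum.inl c) P) k := by
  simpa [pwt] using isPHomog_pderiv h (Sum.inl c)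

lemma isPHomog_pderiv_inr {P : PolySym n} {k : ℕ} (h : IsPHomog n P k) (c : Fin n) :
    IsPHomog n (pderiv (Sum.inr c) P) (k - 1) := by
  simpa [pwt] using isPHomog_pderiv h (Sum.inr c)

lemma euler_p {P : PolySym n} {k : ℕ} (h : IsPHomog n P k) :
    ∑ j, pVar n j * pderiv (Sum.inr j) P = (k : ℝ) • P := by
  classical
  have key : ∀ s ∈ P.support,
      ∑ j, pVar n j * pderiv (Sum.inr j) (monomial s (coeff s P))
        = (k : ℝ) • monomial s (coeff s P) := by
    intro s hs
    have hterm : ∀ j : Fin n, pVar n j * pderiv (Sum.inr j) (monomial s (coeff s P))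
        = (s (Sum.inr j) : ℝ) • monomial s (coeff s P) := by
      intro j
      rw [pderiv_monomial]
      rcases Nat.eq_zero_or_pos (s (Sum.inr j)) with h0 | h1
      · rw [h0]; simp
      · have hle : Finsupp.single (Sum.inr j : Fin n ⊕ Fin n) 1 ≤ s := by
          rw [Finsupp.single_le_iff]; exact h1
        rw [pVar, ← pow_one (X (Sum.inr j) : PolySym n), ← monomial_single_add,
          add_tsub_cancel_of_le hle]
        rw [smul_monomial, smul_eq_mul, mul_comm]
    rw [Finset.sum_congr rfl fun j _ => hterm j, ← Finset.sum_smul]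
    have hk : ∑ j : Fin n, (s (Sum.inr j) : ℝ) = (k : ℝ) := by
      have hws := h (by rwa [MvPolynomial.mem_support_iff] at hs)
      rw [pweight_eq] at hws
      rw [← hws]
      push_cast
      rfl
    rw [hk]
  calc ∑ j, pVar n j * pderiv (Sum.inr j) P
      = ∑ s ∈ P.support, ∑ j, pVar n j * pderiv (Sum.inr j) (monomial s (coeff s P)) := by
        rw [Finset.sum_comm]
        congr 1
        ext j
        conv_lhs => rw [P.as_sum]
        rw [map_sum, Finset.mul_sum]
    _ = ∑ s ∈ P.support, (k : ℝ) • monomial s (coeff s P) := Finset.sum_congr rfl key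
    _ = (k : ℝ) • P := by rw [← Finset.smul_sum]; congr 1; exact P.as_sum.symm

end Aux
section Aux2
variable {n : ℕ}

lemma divOp_apply (P : PolySym n) :
    divOp n P = ∑ c, pderiv (Sum.inl c) (pderiv (Sum.inr c) P) := by
  simp [divOp, dxOp, dpOp, LinearMap.sum_apply]

lemma Lop_apply (δ : ℝ) (Xf : PolyVF n) (P : PolySym n) :
    Lop n δ Xf P = (∑ i, liftX n (Xf i) * pderiv (Sum.inl i) P)
      - (∑ i, ∑ j, (pVar n j * liftX n (pderiv i (Xf j))) * pderiv (Sum.inr i) P)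
      + δ • (liftX n (divVF n Xf) * P) := by
  simp [Lop, mulOp, dxOp, dpOp, LinearMap.sum_apply, LinearMap.mulLeft_apply, mul_assoc]

lemma divOp_pderiv_comm (v : Fin n ⊕ Fin n) (P : PolySym n) :
    divOp n (pderiv v P) = pderiv v (divOp n P) := by
  rw [divOp_apply, divOp_apply, map_sum]
  exact Finset.sum_congr rfl fun c _ => by rw [pderiv_comm' _ v, pderiv_comm' _ v]

lemma divOp_mul (q f : PolySym n) :
    divOp n (q * f) = q * divOp n f
      + ∑ c, (pderiv (Sum.inl c) q * pderiv (Sum.inr c) f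
          + pderiv (Sum.inr c) q * pderiv (Sum.inl c) f
          + pderiv (Sum.inl c) (pderiv (Sum.inr c) q) * f) := by
  rw [divOp_apply, divOp_apply, Finset.mul_sum, ← Finset.sum_add_distrib]
  refine Finset.sum_congr rfl fun c _ => ?_
  rw [pderiv_mul, map_add, pderiv_mul, pderiv_mul]
  ring

lemma pderiv_inr_pB (c j : Fin n) (g : PolyDen n) :
    pderiv (Sum.inr c) (pVar n j * liftX n g) = if c = j then liftX n g else 0 := by
  rw [pderiv_mul, liftX_pderiv_inr, mul_zero, add_zero, pVar]
  rcases eq_or_ne c j with rfl | hcj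
  · simp
  · rw [pderiv_X_of_ne (by simpa using hcj.symm)]
    simp [hcj]

lemma pderiv_inl_pB (c j : Fin n) (g : PolyDen n) :
    pderiv (Sum.inl c) (pVar n j * liftX n g) = pVar n j * liftX n (pderiv c g) := by
  rw [pderiv_mul, liftX_pderiv_inl, pVar, pderiv_X_of_ne (by simp), zero_mul, zero_add]

lemma pderiv_inl_inr_pB (c j : Fin n) (g : PolyDen n) :
    pderiv (Sum.inl c) (pderiv (Sum.inr c) (pVar n j * liftX n g))
      = if c = j then liftX n (pderiv c g) else 0 := by
  rw [pderiv_inr_pB]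
  split_ifs
  · rw [liftX_pderiv_inl]
  · simp

lemma comm_general (δ : ℝ) (Xf : PolyVF n) (P : PolySym n) :
    divOp n (Lop n δ Xf P) - Lop n δ Xf (divOp n P)
      = -(∑ i, ∑ j, ∑ c, (pVar n j * liftX n (pderiv c (pderiv i (Xf j))))
            * pderiv (Sum.inr c) (pderiv (Sum.inr i) P))
        + (δ - 1) • ∑ i, ∑ j, liftX n (pderiv j (pderiv i (Xf j))) * pderiv (Sum.inr i) P := by
  have hT1 : divOp n (∑ i, liftX n (Xf i) * pderiv (Sum.inl i) P)
      = (∑ i, liftX n (Xf i) * pderiv (Sum.inl i) (divOp n P))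
        + ∑ i, ∑ c, liftX n (pderiv c (Xf i))
            * pderiv (Sum.inr c) (pderiv (Sum.inl i) P) := by
    rw [map_sum, ← Finset.sum_add_distrib]
    refine Finset.sum_congr rfl fun i _ => ?_
    rw [divOp_mul, divOp_pderiv_comm]
    simp [liftX_pderiv_inr, liftX_pderiv_inl]
  have hterm : ∀ i j : Fin n,
      divOp n ((pVar n j * liftX n (pderiv i (Xf j))) * pderiv (Sum.inr i) P)
        = (pVar n j * liftX n (pderiv i (Xf j))) * pderiv (Sum.inr i) (divOp n P)
          + ((∑ c, (pVar n j * liftX n (pderiv c (pderiv i (Xf j))))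
              * pderiv (Sum.inr c) (pderiv (Sum.inr i) P))
          + liftX n (pderiv i (Xf j)) * pderiv (Sum.inl j) (pderiv (Sum.inr i) P)
          + liftX n (pderiv j (pderiv i (Xf j))) * pderiv (Sum.inr i) P) := by
    intro i j
    rw [divOp_mul, divOp_pderiv_comm]
    congr 1
    rw [Finset.sum_add_distrib, Finset.sum_add_distrib]
    refine congrArg₂ (· + ·) ?_ ?_
    · congr 1
      · exact Finset.sum_congr rfl fun c _ => by rw [pderiv_inl_pB]
      · rw [Finset.sum_congr rfl fun c (_ : c ∈ Finset.univ) => by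
          rw [pderiv_inr_pB, ite_mul, zero_mul]]
        simp
    · rw [Finset.sum_congr rfl fun c (_ : c ∈ Finset.univ) => by
        rw [pderiv_inl_inr_pB, ite_mul, zero_mul]]
      simp
  have hT2 : divOp n (∑ i, ∑ j, (pVar n j * liftX n (pderiv i (Xf j))) * pderiv (Sum.inr i) P)
      = (∑ i, ∑ j, (pVar n j * liftX n (pderiv i (Xf j))) * pderiv (Sum.inr i) (divOp n P))
        + ((∑ i, ∑ j, ∑ c, (pVar n j * liftX n (pderiv c (pderiv i (Xf j))))
              * pderiv (Sum.inr c) (pderiv (Sum.inr i) P))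
          + (∑ i, ∑ j, liftX n (pderiv i (Xf j)) * pderiv (Sum.inl j) (pderiv (Sum.inr i) P))
          + (∑ i, ∑ j, liftX n (pderiv j (pderiv i (Xf j))) * pderiv (Sum.inr i) P)) := by
    rw [map_sum]
    rw [Finset.sum_congr rfl fun i _ => map_sum (divOp n) _ _]
    rw [Finset.sum_congr rfl fun i _ => Finset.sum_congr rfl fun j _ => hterm i j]
    simp only [Finset.sum_add_distrib]
  have hT3 : divOp n (liftX n (divVF n Xf) * P)
      = liftX n (divVF n Xf) * divOp n P
        + ∑ c, liftX n (pderiv c (divVF n Xf)) * pderiv (Sum.inr c) P := by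
    rw [divOp_mul]
    simp [liftX_pderiv_inr, liftX_pderiv_inl]
  have hR1 : (∑ i, ∑ c, liftX n (pderiv c (Xf i)) * pderiv (Sum.inr c) (pderiv (Sum.inl i) P))
      = ∑ i, ∑ j, liftX n (pderiv i (Xf j)) * pderiv (Sum.inl j) (pderiv (Sum.inr i) P) := by
    rw [Finset.sum_comm]
    exact Finset.sum_congr rfl fun c _ => Finset.sum_congr rfl fun i _ => by
      rw [pderiv_comm']
  have hR3 : (∑ c, liftX n (pderiv c (divVF n Xf)) * pderiv (Sum.inr c) P)
      = ∑ i, ∑ j, liftX n (pderiv j (pderiv i (Xf j))) * pderiv (Sum.inr i) P := by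
    refine Finset.sum_congr rfl fun i _ => ?_
    rw [divVF, map_sum, liftX, map_sum, Finset.sum_mul]
    exact Finset.sum_congr rfl fun j _ => by rw [pderiv_comm']; rfl
  rw [Lop_apply, Lop_apply, map_add, map_sub, map_smul, hT1, hT2, hT3, hR1, hR3]
  simp only [smul_add, sub_smul, one_smul]
  abel

end Aux2
section Aux3
variable {n : ℕ}

lemma dX (a b : Fin n) : pderiv a (X b : PolyDen n) = if a = b then 1 else 0 := by
  rcases eq_or_ne a b with rfl | h
  · simp
  · simp [pderiv_X_of_ne (Ne.symm h), h]

lemma ddX (u v w : Fin n) : pderiv u (pderiv v (X w : PolyDen n)) = 0 := by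
  rw [dX]
  split_ifs <;> simp

lemma hd2' (i c a j : Fin n) :
    liftX n (pderiv c (pderiv a (projVF n i j)))
      = (if a = i ∧ c = j then 1 else 0) + (if a = j ∧ c = i then 1 else 0) := by
  classical
  have key : pderiv c (pderiv a (projVF n i j))
      = ((if a = i ∧ c = j then 1 else 0) + (if a = j ∧ c = i then 1 else 0) : PolyDen n) := by
    rw [projVF, pderiv_mul, map_add, pderiv_mul, pderiv_mul, ddX, ddX, zero_mul, mul_zero,
      add_zero, zero_add, dX, dX, dX, dX]
    split_ifs <;> simp_all
  rw [key]
  split_ifs <;> simp [liftX]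

lemma comm_inversion (δ : ℝ) (i : Fin n) {P : PolySym n} {k : ℕ} (hk : 1 ≤ k)
    (h : IsPHomog n P k) :
    divOp n (Lop n δ (projVF n i) P) - Lop n δ (projVF n i) (divOp n P)
      = ((((n : ℝ)) + 1) * (δ - 1) - 2 * ((k : ℝ) - 1)) • pderiv (Sum.inr i) P := by
  classical
  have heuler : ∑ j, pVar n j * pderiv (Sum.inr j) (pderiv (Sum.inr i) P)
      = ((k : ℝ) - 1) • pderiv (Sum.inr i) P := by
    have h2 := euler_p (isPHomog_pderiv_inr h i)
    rw [h2]
    congr 1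
    push_cast [hk]
    ring
  have h1 : (∑ a, ∑ j, ∑ c, pVar n j * liftX n (pderiv c (pderiv a (projVF n i j)))
        * pderiv (Sum.inr c) (pderiv (Sum.inr a) P))
      = (2 * ((k : ℝ) - 1)) • pderiv (Sum.inr i) P := by
    have step : (∑ a, ∑ j, ∑ c, pVar n j * liftX n (pderiv c (pderiv a (projVF n i j)))
          * pderiv (Sum.inr c) (pderiv (Sum.inr a) P))
        = (∑ j, pVar n j * pderiv (Sum.inr j) (pderiv (Sum.inr i) P))
          + ∑ a, pVar n a * pderiv (Sum.inr i) (pderiv (Sum.inr a) P) := by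
      simp only [hd2', add_mul, mul_add, mul_ite, ite_mul, mul_one, mul_zero, zero_mul,
        one_mul, ite_and, Finset.sum_add_distrib, Finset.sum_ite_irrel, Finset.sum_ite_eq,
        Finset.sum_ite_eq', Finset.mem_univ, if_true, Finset.sum_const_zero]
    rw [step]
    have hsw : ∑ a, pVar n a * pderiv (Sum.inr i) (pderiv (Sum.inr a) P)
        = ∑ a, pVar n a * pderiv (Sum.inr a) (pderiv (Sum.inr i) P) :=
      Finset.sum_congr rfl fun a _ => by rw [pderiv_comm']
    rw [hsw, heuler, two_mul, add_smul]
  have h2 : (∑ a, ∑ j, liftX n (pderiv j (pderiv a (projVF n i j))) * pderiv (Sum.inr a) P)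
      = (((n : ℝ)) + 1) • pderiv (Sum.inr i) P := by
    have step : ∀ a : Fin n, (∑ j, liftX n (pderiv j (pderiv a (projVF n i j))))
        = (if a = i then (C ((n : ℝ) + 1) : PolySym n) else 0) := by
      intro a
      simp only [hd2', ite_and, Finset.sum_add_distrib]
      rcases eq_or_ne a i with rfl | hne
      · simp [Finset.sum_ite_eq, Finset.card_univ, map_add, map_one, map_natCast]
      · simp [hne, Finset.sum_ite_eq]
    calc (∑ a, ∑ j, liftX n (pderiv j (pderiv a (projVF n i j))) * pderiv (Sum.inr a) P)
        = ∑ a, (∑ j, liftX n (pderiv j (pderiv a (projVF n i j)))) * pderiv (Sum.inr a) P :=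
          Finset.sum_congr rfl fun a _ => (Finset.sum_mul _ _ _).symm
      _ = ∑ a, (if a = i then (C ((n : ℝ) + 1) : PolySym n) else 0) * pderiv (Sum.inr a) P :=
          Finset.sum_congr rfl fun a _ => by rw [step]
      _ = (((n : ℝ)) + 1) • pderiv (Sum.inr i) P := by
          simp only [ite_mul, zero_mul, Finset.sum_ite_eq, Finset.sum_ite_eq', Finset.mem_univ, if_true]
          rw [C_mul']
  rw [comm_general, h1, h2, smul_smul, ← neg_smul, ← add_smul]
  congr 1
  ring

end Aux3
section Aux4
variable {n : ℕ}

lemma dd_zero {f : PolyDen n} (hf : f.totalDegree ≤ 1) (c a : Fin n) :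
    pderiv c (pderiv a f) = 0 := by
  classical
  conv_lhs => rw [f.as_sum]
  rw [map_sum, map_sum]
  apply Finset.sum_eq_zero
  intro s hs
  rw [pderiv_monomial, pderiv_monomial]
  have hdeg : ∑ v, s v ≤ 1 := by
    have h1 := le_totalDegree hs
    rw [Finsupp.sum_fintype _ _ (by simp)] at h1
    omega
  have hkey : (s a) * ((s - Finsupp.single a 1 : _ →₀ ℕ) c) = 0 := by
    rcases Nat.eq_zero_or_pos (s a) with h0 | h1
    · rw [h0, zero_mul]
    · have h2 : (s - Finsupp.single a 1 : _ →₀ ℕ) c = 0 := by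
        rcases eq_or_ne c a with rfl | hca
        · have hle : s c ≤ 1 := le_trans (Finset.single_le_sum (f := fun v => s v)
            (fun _ _ => Nat.zero_le _) (Finset.mem_univ c)) hdeg
          simp only [Finsupp.tsub_apply, Finsupp.single_apply, eq_self_iff_true, if_true]
          omega
        · have h3 : s a + s c ≤ ∑ v, s v := by
            rw [← Finset.add_sum_erase _ _ (Finset.mem_univ a)]
            have : s c ≤ ∑ v ∈ Finset.univ.erase a, s v :=
              Finset.single_le_sum (f := fun v => s v) (fun _ _ => Nat.zero_le _)
                (Finset.mem_erase.2 ⟨hca, Finset.mem_univ c⟩)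
            omega
          simp only [Finsupp.tsub_apply, Finsupp.single_apply,
            if_neg (fun hh : a = c => hca hh.symm)]
          omega
      rw [h2, mul_zero]
  have hcast : ((s a : ℝ)) * ((s - Finsupp.single a 1 : _ →₀ ℕ) c : ℝ) = 0 := by
    exact_mod_cast congrArg (Nat.cast : ℕ → ℝ) hkey
  rw [mul_assoc, hcast, mul_zero, map_zero]

lemma comm_affine (δ : ℝ) {Xf : PolyVF n} (hXf : ∀ i, (Xf i).totalDegree ≤ 1)
    (P : PolySym n) : divOp n (Lop n δ Xf P) = Lop n δ Xf (divOp n P) := by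
  have hz : ∀ (c a j : Fin n), pderiv c (pderiv a (Xf j)) = 0 :=
    fun c a j => dd_zero (hXf j) c a
  have h := comm_general δ Xf P
  simp only [hz, liftX, map_zero, mul_zero, zero_mul, Finset.sum_const_zero, neg_zero,
    smul_zero, add_zero, zero_add] at h
  exact sub_eq_zero.mp h

lemma comm_affine_pow (δ : ℝ) {Xf : PolyVF n} (hXf : ∀ i, (Xf i).totalDegree ≤ 1)
    (l : ℕ) (P : PolySym n) :
    Lop n δ Xf ((divOp n ^ l) P) = (divOp n ^ l) (Lop n δ Xf P) := by
  induction l generalizing P with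
  | zero => simp
  | succ m ih =>
    rw [pow_succ, Module.End.mul_apply, Module.End.mul_apply, ih, comm_affine δ hXf]

lemma isPHomog_divOp {P : PolySym n} {k : ℕ} (h : IsPHomog n P k) :
    IsPHomog n (divOp n P) (k - 1) := by
  rw [divOp_apply]
  exact IsWeightedHomogeneous.sum _ _ _ fun c _ =>
    isPHomog_pderiv_inl (isPHomog_pderiv_inr h c) c

lemma isPHomog_divOp_pow {P : PolySym n} {k : ℕ} (h : IsPHomog n P k) (m : ℕ) :
    IsPHomog n ((divOp n ^ m) P) (k - m) := by
  induction m generalizing P k with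
  | zero => simpa using h
  | succ m ih =>
    rw [pow_succ, Module.End.mul_apply]
    have := ih (isPHomog_divOp h)
    simpa [Nat.sub_sub, Nat.add_comm] using this

lemma divOp_pow_pderiv_comm (m : ℕ) (v : Fin n ⊕ Fin n) (P : PolySym n) :
    (divOp n ^ m) (pderiv v P) = pderiv v ((divOp n ^ m) P) := by
  induction m generalizing P with
  | zero => simp
  | succ m ih =>
    rw [pow_succ, Module.End.mul_apply, Module.End.mul_apply, divOp_pderiv_comm, ih]

lemma comm_inversion_pow (δ : ℝ) (i : Fin n) :
    ∀ l k : ℕ, l ≤ k → ∀ P : PolySym n, IsPHomog n P k →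
    (divOp n ^ l) (Lop n δ (projVF n i) P) - Lop n δ (projVF n i) ((divOp n ^ l) P)
      = ((l : ℝ) * ((((n : ℝ)) + 1) * (δ - 1) - (2 * (k : ℝ) - (l : ℝ) - 1)))
          • (divOp n ^ (l - 1)) (pderiv (Sum.inr i) P) := by
  intro l
  induction l with
  | zero => intro k _ P _; simp
  | succ m ih =>
    intro k hk P hP
    have hk1 : 1 ≤ k := le_trans (Nat.succ_le_succ (Nat.zero_le m)) hk
    set e : ℝ := (((n : ℝ)) + 1) * (δ - 1) - 2 * ((k : ℝ) - 1) with he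
    have hD : divOp n (Lop n δ (projVF n i) P)
        = Lop n δ (projVF n i) (divOp n P) + e • pderiv (Sum.inr i) P := by
      have h0 := comm_inversion δ i hk1 hP
      rw [sub_eq_iff_eq_add] at h0
      rw [h0, add_comm]
    have hQ : IsPHomog n (divOp n P) (k - 1) := isPHomog_divOp hP
    have hmk : m ≤ k - 1 := by omega
    have hih := ih (k - 1) hmk (divOp n P) hQ
    have hpow : (divOp n ^ (m + 1)) (Lop n δ (projVF n i) P)
        = (divOp n ^ m) (divOp n (Lop n δ (projVF n i) P)) := by
      rw [pow_succ, Module.End.mul_apply]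
    have hpow2 : (divOp n ^ (m + 1)) P = (divOp n ^ m) (divOp n P) := by
      rw [pow_succ, Module.End.mul_apply]
    rw [hpow, hD, map_add, map_smul, hpow2]
    rw [sub_eq_iff_eq_add] at hih
    rw [hih]
    have hcomm : (divOp n ^ (m - 1)) (pderiv (Sum.inr i) (divOp n P))
        = (divOp n ^ (m - 1)) (divOp n (pderiv (Sum.inr i) P)) := by
      rw [divOp_pderiv_comm]
    rw [hcomm]
    have hkc : ((k - 1 : ℕ) : ℝ) = (k : ℝ) - 1 := by push_cast [hk1]; ring
    rcases Nat.eq_zero_or_pos m with rfl | hm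
    · simp only [Nat.cast_zero, zero_mul, zero_smul, zero_add, pow_zero, Module.End.one_apply,
        Nat.zero_sub, Nat.add_sub_cancel]
      rw [add_sub_cancel_left]
      congr 1
      push_cast
      ring
    · have hm1 : m - 1 + 1 = m := Nat.succ_pred_eq_of_pos hm
      rw [← Module.End.mul_apply, ← pow_succ, hm1]
      have hsc : ((m : ℝ) * ((((n : ℝ)) + 1) * (δ - 1) - (2 * ((k - 1 : ℕ) : ℝ) - (m : ℝ) - 1)))
            + e
          = (((m + 1 : ℕ) : ℝ)
              * ((((n : ℝ)) + 1) * (δ - 1) - (2 * (k : ℝ) - ((m + 1 : ℕ) : ℝ) - 1))) := by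
        rw [hkc, he]
        push_cast
        ring
      rw [← hsc, add_smul, Nat.add_sub_cancel]
      abel

end Aux4
section Aux5
variable {n : ℕ}

lemma fs1 (i : Fin n) (a b : ℕ) :
    (Finsupp.single (Sum.inl i : Fin n ⊕ Fin n) (a+1) + Finsupp.single (Sum.inr i) (b+1))
      - Finsupp.single (Sum.inr i) 1 - Finsupp.single (Sum.inl i) 1
    = Finsupp.single (Sum.inl i) a + Finsupp.single (Sum.inr i) b := by
  ext w
  rcases w with w | w <;>
    · simp only [Finsupp.tsub_apply, Finsupp.add_apply, Finsupp.single_apply]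
      split_ifs <;> simp_all

lemma fs2 (i : Fin n) (u k : ℕ) :
    (Finsupp.single (Sum.inl i : Fin n ⊕ Fin n) u + Finsupp.single (Sum.inr i) k)
      - Finsupp.single (Sum.inr i) 1
    = Finsupp.single (Sum.inl i) u + Finsupp.single (Sum.inr i) (k - 1) := by
  ext w
  rcases w with w | w <;>
    · simp only [Finsupp.tsub_apply, Finsupp.add_apply, Finsupp.single_apply]
      split_ifs <;> simp_all

lemma xp_monomial (i : Fin n) (u v : ℕ) :
    (X (Sum.inl i) : PolySym n) ^ u * (X (Sum.inr i)) ^ v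
      = monomial (Finsupp.single (Sum.inl i) u + Finsupp.single (Sum.inr i) v) 1 := by
  rw [X_pow_eq_monomial, X_pow_eq_monomial, monomial_mul, one_mul]

lemma divOp_xp (i : Fin n) (a b : ℕ) :
    divOp n ((X (Sum.inl i) : PolySym n) ^ (a + 1) * (X (Sum.inr i)) ^ (b + 1))
      = C (((a : ℝ) + 1) * ((b : ℝ) + 1))
          * ((X (Sum.inl i) : PolySym n) ^ a * (X (Sum.inr i)) ^ b) := by
  classical
  rw [xp_monomial, xp_monomial, divOp_apply]
  rw [Finset.sum_eq_single i]
  · rw [pderiv_monomial, pderiv_monomial, C_mul_monomial]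
    have h1 : ((Finsupp.single (Sum.inl i : Fin n ⊕ Fin n) (a+1)
        + Finsupp.single (Sum.inr i) (b+1) : _ →₀ ℕ)) (Sum.inr i) = b + 1 := by
      simp [Finsupp.single_apply]
    have h2 : ((Finsupp.single (Sum.inl i : Fin n ⊕ Fin n) (a+1)
        + Finsupp.single (Sum.inr i) (b+1)
        - Finsupp.single (Sum.inr i) 1 : _ →₀ ℕ)) (Sum.inl i) = a + 1 := by
      simp [Finsupp.single_apply, Finsupp.tsub_apply, Finsupp.add_apply]
    rw [h1, h2]
    rw [fs1]
    congr 1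
    push_cast
    ring
  · intro c _ hci
    rw [pderiv_monomial]
    have h0 : ((Finsupp.single (Sum.inl i : Fin n ⊕ Fin n) (a+1)
        + Finsupp.single (Sum.inr i) (b+1) : _ →₀ ℕ)) (Sum.inr c) = 0 := by
      simp [Finsupp.single_apply, Finsupp.add_apply, Ne.symm hci]
    rw [h0]
    simp
  · simp

lemma divOp_pow_xp (i : Fin n) :
    ∀ m a b : ℕ, m ≤ a → m ≤ b →
    ∃ r : ℝ, 0 < r ∧ (divOp n ^ m) ((X (Sum.inl i) : PolySym n) ^ a * (X (Sum.inr i)) ^ b)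
      = C r * ((X (Sum.inl i) : PolySym n) ^ (a - m) * (X (Sum.inr i)) ^ (b - m)) := by
  intro m
  induction m with
  | zero => intro a b _ _; exact ⟨1, one_pos, by simp⟩
  | succ m ih =>
    intro a b ha hb
    have ha1 : 1 ≤ a := le_trans (Nat.succ_le_succ (Nat.zero_le m)) ha
    have hb1 : 1 ≤ b := le_trans (Nat.succ_le_succ (Nat.zero_le m)) hb
    obtain ⟨r, hr, hre⟩ := ih (a - 1) (b - 1) (by omega) (by omega)
    refine ⟨((a - 1 : ℕ) + 1 : ℝ) * ((b - 1 : ℕ) + 1) * r, by positivity, ?_⟩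
    have hsucc : (divOp n ^ (m + 1)) ((X (Sum.inl i) : PolySym n) ^ a * (X (Sum.inr i)) ^ b)
        = (divOp n ^ m) (divOp n ((X (Sum.inl i) : PolySym n) ^ a * (X (Sum.inr i)) ^ b)) := by
      rw [pow_succ, Module.End.mul_apply]
    rw [hsucc]
    have hab : (X (Sum.inl i) : PolySym n) ^ a * (X (Sum.inr i)) ^ b
        = (X (Sum.inl i) : PolySym n) ^ ((a - 1) + 1) * (X (Sum.inr i)) ^ ((b - 1) + 1) := by
      congr 2 <;> omega
    rw [hab, divOp_xp, C_mul', map_smul, hre, ← C_mul', ← mul_assoc, ← C_mul]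
    have e1 : a - 1 - m = a - (m + 1) := by omega
    have e2 : b - 1 - m = b - (m + 1) := by omega
    rw [e1, e2]

lemma isPHomog_xp (i : Fin n) (u k : ℕ) :
    IsPHomog n ((X (Sum.inl i) : PolySym n) ^ u * (X (Sum.inr i)) ^ k) k := by
  classical
  rw [xp_monomial]
  apply isWeightedHomogeneous_monomial
  rw [pweight_eq]
  have : ∀ j : Fin n, ((Finsupp.single (Sum.inl i : Fin n ⊕ Fin n) u
      + Finsupp.single (Sum.inr i) k : _ →₀ ℕ)) (Sum.inr j) = if i = j then k else 0 := by
    intro j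
    simp [Finsupp.add_apply, Finsupp.single_apply, Sum.inr.injEq]
  simp [this]

lemma pderiv_inr_xp (i : Fin n) (u k : ℕ) (hk : 1 ≤ k) :
    pderiv (Sum.inr i) ((X (Sum.inl i) : PolySym n) ^ u * (X (Sum.inr i)) ^ k)
      = (k : ℝ) • ((X (Sum.inl i) : PolySym n) ^ u * (X (Sum.inr i)) ^ (k - 1)) := by
  classical
  rw [xp_monomial, xp_monomial, pderiv_monomial]
  have h1 : ((Finsupp.single (Sum.inl i : Fin n ⊕ Fin n) u
      + Finsupp.single (Sum.inr i) k : _ →₀ ℕ)) (Sum.inr i) = k := by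
    simp [Finsupp.single_apply, Finsupp.add_apply]
  rw [h1, smul_monomial, fs2]
  rw [smul_eq_mul, one_mul, mul_one]

end Aux5
/-- The operator `D^l` on weight-`δ` symbols homogeneous of degree `k` in `p`
is `sl_{n+1}`-invariant (commutes with `L^δ_X` for every projective vector field `X`) if and
only if `δ = 1 + (2k - l - 1)/(n+1)`. -/
theorem divOp_pow_projectively_invariant_iff (n k l : ℕ) (hn : 1 ≤ n) (hl : 1 ≤ l)
    (hlk : l ≤ k) (δ : ℝ) :
    (∀ Xf ∈ projGenSet n, ∀ P : PolySym n, IsPHomog n P k →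
        Lop n δ Xf ((divOp n ^ l) P) = (divOp n ^ l) (Lop n δ Xf P))
      ↔ δ = 1 + (2 * (k : ℝ) - (l : ℝ) - 1) / ((n : ℝ) + 1) := by
  have hn1 : ((n : ℝ) + 1) ≠ 0 := by positivity
  constructor
  · intro H
    have i0 : Fin n := ⟨0, hn⟩
    have hP : IsPHomog n ((X (Sum.inl i0) : PolySym n) ^ (l - 1) * (X (Sum.inr i0)) ^ k) k :=
      isPHomog_xp i0 (l - 1) k
    have hmem : projVF n i0 ∈ projGenSet n := Or.inr ⟨i0, rfl⟩
    have h0 := H (projVF n i0) hmem _ hP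
    have hc := comm_inversion_pow δ i0 l k hlk _ hP
    rw [← h0, sub_self] at hc
    rw [pderiv_inr_xp i0 (l - 1) k (le_trans hl hlk), map_smul] at hc
    obtain ⟨r, hr, hre⟩ := divOp_pow_xp i0 (l - 1) (l - 1) (k - 1) le_rfl (by omega)
    rw [hre] at hc
    have hx0 : (l - 1) - (l - 1) = 0 := by omega
    have he2 : (k - 1) - (l - 1) = k - l := by omega
    rw [hx0, he2, pow_zero, one_mul, C_mul', smul_smul, smul_smul] at hc
    have hX : ((X (Sum.inr i0) : PolySym n) ^ (k - l)) ≠ 0 :=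
      pow_ne_zero _ (X_ne_zero _)
    have hs : ((l : ℝ) * ((((n : ℝ)) + 1) * (δ - 1) - (2 * (k : ℝ) - (l : ℝ) - 1)))
        * (k : ℝ) * r = 0 := by
      have hcoeff := congrArg (coeff (Finsupp.single (Sum.inr i0) (k - l))) hc
      rw [coeff_zero, coeff_smul, coeff_X_pow, if_pos rfl] at hcoeff
      simpa using hcoeff.symm
    have hk0 : (k : ℝ) ≠ 0 := Nat.cast_ne_zero.mpr (by omega)
    have hl0 : (l : ℝ) ≠ 0 := Nat.cast_ne_zero.mpr (by omega)
    have hb : (((n : ℝ)) + 1) * (δ - 1) - (2 * (k : ℝ) - (l : ℝ) - 1) = 0 := by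
      rcases mul_eq_zero.mp hs with h | h
      · rcases mul_eq_zero.mp h with h' | h'
        · rcases mul_eq_zero.mp h' with h'' | h''
          · exact absurd h'' hl0
          · exact h''
        · exact absurd h' hk0
      · exact absurd h (ne_of_gt hr)
    field_simp
    linarith [hb]
  · intro hδ Xf hXf P hP
    rcases hXf with haff | ⟨i, rfl⟩
    · exact comm_affine_pow δ haff l P
    · have hc := comm_inversion_pow δ i l k hlk P hP
      have hz : ((l : ℝ) * ((((n : ℝ)) + 1) * (δ - 1) - (2 * (k : ℝ) - (l : ℝ) - 1))) = 0 := by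
        rw [hδ]
        field_simp
        ring
      rw [hz, zero_smul] at hc
      exact (sub_eq_zero.mp hc).symm
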